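/- Let (S₁,S₂) be binary with joint distribution P(0,0)=1-q, P(1,1)=qα, P(0,1)=0, P(1,0)=q(1-α), and X ~ Bern(p) independent of (S₁,S₂); set Y₁=S₁·X, Y₂=S₂·X. Then H(Y₁,S₁|Y₂,S₂) - H(S₁|Y₁,Y₂,S₂,X) = q(1-α)·H_b(p) + p(1-qα)·H_b(q(1-α)/(1-qα)), where entropies use natural logarithm (assume qα < 1). -/

import Mathlib

/-- Binary entropy (natural logarithm). -/
noncomputable def binEnt (x : ℝ) : ℝ := Real.negMulLog x + Real.negMulLog (1 - x)

/-- Bernoulli pmf on `Bool`. -/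
noncomputable def bern (p : ℝ) : Bool → ℝ := fun b => if b then p else 1 - p

/-- Joint pmf of the state pair `(S₁,S₂)`:
`P(0,0) = 1-q`, `P(1,1) = qα`, `P(0,1) = 0`, `P(1,0) = q(1-α)`. -/
noncomputable def pS (q α : ℝ) : Bool → Bool → ℝ :=
  fun s1 s2 =>
    match s1, s2 with
    | false, false => 1 - q
    | true, true => q * α
    | false, true => 0
    | true, false => q * (1 - α)

/-- Joint pmf of `(S₁,S₂,X)` with `X ~ Bern p` independent of `(S₁,S₂)`. -/
noncomputable def J (p q α : ℝ) : Bool → Bool → Bool → ℝ :=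
  fun s1 s2 x => pS q α s1 s2 * bern p x

/-- `P(Y₁ = y1, S₁ = s1, Y₂ = y2, S₂ = s2)` where `Y₁ = S₁ ⋅ X`, `Y₂ = S₂ ⋅ X`. -/
noncomputable def P4 (p q α : ℝ) (y1 s1 y2 s2 : Bool) : ℝ :=
  ∑ a : Bool, ∑ b : Bool, ∑ x : Bool,
    J p q α a b x * (if y1 = (a && x) ∧ s1 = a ∧ y2 = (b && x) ∧ s2 = b then 1 else 0)

/-- `P(Y₂ = y2, S₂ = s2)`. -/
noncomputable def P2 (p q α : ℝ) (y2 s2 : Bool) : ℝ :=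
  ∑ a : Bool, ∑ b : Bool, ∑ x : Bool,
    J p q α a b x * (if y2 = (b && x) ∧ s2 = b then 1 else 0)

/-- `P(S₁ = s1, Y₁ = y1, Y₂ = y2, S₂ = s2, X = x)`. -/
noncomputable def P5 (p q α : ℝ) (s1 y1 y2 s2 x : Bool) : ℝ :=
  ∑ a : Bool, ∑ b : Bool, ∑ x' : Bool,
    J p q α a b x' *
      (if s1 = a ∧ y1 = (a && x') ∧ y2 = (b && x') ∧ s2 = b ∧ x = x' then 1 else 0)

/-- `P(Y₁ = y1, Y₂ = y2, S₂ = s2, X = x)`. -/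
noncomputable def Q4 (p q α : ℝ) (y1 y2 s2 x : Bool) : ℝ :=
  ∑ a : Bool, ∑ b : Bool, ∑ x' : Bool,
    J p q α a b x' *
      (if y1 = (a && x') ∧ y2 = (b && x') ∧ s2 = b ∧ x = x' then 1 else 0)

/-- Conditional entropy `H(Y₁,S₁ | Y₂,S₂)`. -/
noncomputable def HY1S1givenY2S2 (p q α : ℝ) : ℝ :=
  -∑ a : Bool, ∑ b : Bool, ∑ x : Bool,
    J p q α a b x *
      Real.log (P4 p q α (a && x) a (b && x) b / P2 p q α (b && x) b)

/-- Conditional entropy `H(S₁ | Y₁,Y₂,S₂,X)`. -/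
noncomputable def HS1givenY1Y2S2X (p q α : ℝ) : ℝ :=
  -∑ a : Bool, ∑ b : Bool, ∑ x : Bool,
    J p q α a b x *
      Real.log (P5 p q α a (a && x) (b && x) b x / Q4 p q α (a && x) (b && x) b x)


lemma logdd (x : ℝ) : Real.log (x / x) = 0 := by
  rcases eq_or_ne x 0 with h | h
  · simp [h]
  · simp [div_self h]

lemma aux (p A B : ℝ) (hp0 : 0 ≤ p) (hp1 : p ≤ 1) (hA : 0 ≤ A) (hB : 0 ≤ B)
    (hD : 0 < B + A) :
    -(A * (1 - p) * Real.log (A / (B + A))) + -(A * p * Real.log (A / (B + A))) +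
      (-(B * (1 - p) * Real.log (B * (1 - p) / (B + A))) +
        -(B * p * Real.log (B * p / (B + A)))) -
      (-(A * (1 - p) * Real.log (A * (1 - p) / (B * (1 - p) + A * (1 - p)))) +
        -(A * p * Real.log (A * p / (A * p))) +
        (-(B * (1 - p) * Real.log (B * (1 - p) / (B * (1 - p) + A * (1 - p)))) +
          -(B * p * Real.log (B * p / (B * p))))) =
    B * (Real.negMulLog p + Real.negMulLog (1 - p)) +
      p * (B + A) * (Real.negMulLog (B / (B + A)) + Real.negMulLog (A / (B + A))) := by
  have hD' : B + A ≠ 0 := hD.ne'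
  rcases eq_or_lt_of_le hp0 with hp0' | hp0'
  · subst hp0'
    simp [Real.negMulLog]
  rcases eq_or_lt_of_le hp1 with hp1' | hp1'
  · subst hp1'
    simp [logdd, Real.negMulLog]
    field_simp
    ring
  have h1p : (1 : ℝ) - p ≠ 0 := by linarith
  rcases eq_or_lt_of_le hB with hB' | hB'
  · subst hB'
    have hA' : 0 < A := by linarith
    simp [logdd, Real.negMulLog, div_self hA'.ne']
  rcases eq_or_lt_of_le hA with hA' | hA'
  · subst hA'
    have e1 : B * (1 - p) / (B + 0) = 1 - p := by field_simp; ring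
    have e2 : B * p / (B + 0) = p := by field_simp; ring
    have e3 : B * (1 - p) + 0 * (1 - p) = B * (1 - p) := by ring
    rw [e1, e2, e3]
    simp [logdd, Real.negMulLog, div_self hB'.ne']
    ring
  -- general case
  have e1 : B * (1 - p) + A * (1 - p) = (B + A) * (1 - p) := by ring
  rw [e1, mul_div_mul_right _ _ h1p, mul_div_mul_right _ _ h1p, logdd, logdd]
  have hu : Real.log (A / (B + A)) = Real.log A - Real.log (B + A) :=
    Real.log_div hA'.ne' hD'
  have hw : Real.log (B / (B + A)) = Real.log B - Real.log (B + A) :=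
    Real.log_div hB'.ne' hD'
  have hv1 : Real.log (B * (1 - p) / (B + A)) =
      Real.log B + Real.log (1 - p) - Real.log (B + A) := by
    rw [Real.log_div (by positivity) hD', Real.log_mul hB'.ne' h1p]
  have hv2 : Real.log (B * p / (B + A)) =
      Real.log B + Real.log p - Real.log (B + A) := by
    rw [Real.log_div (by positivity) hD', Real.log_mul hB'.ne' hp0'.ne']
  rw [hu, hw, hv1, hv2]
  simp only [Real.negMulLog, hu, hw]
  field_simp
  ring

theorem entropy_difference_eq (p q α : ℝ) (hp : p ∈ Set.Icc (0:ℝ) 1)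
    (hq : q ∈ Set.Icc (0:ℝ) 1) (hα : α ∈ Set.Icc (0:ℝ) 1) (hqα : q * α < 1) :
    HY1S1givenY2S2 p q α - HS1givenY1Y2S2X p q α =
      q * (1 - α) * binEnt p + p * (1 - q * α) * binEnt (q * (1 - α) / (1 - q * α)) := by
  obtain ⟨hp0, hp1⟩ := hp
  obtain ⟨hq0, hq1⟩ := hq
  obtain ⟨ha0, ha1⟩ := hα
  have hA : (0:ℝ) ≤ 1 - q := by linarith
  have hB : (0:ℝ) ≤ q * (1 - α) := by nlinarith
  have hD : (0:ℝ) < q * (1 - α) + (1 - q) := by nlinarith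
  unfold HY1S1givenY2S2 HS1givenY1Y2S2X P4 P2 P5 Q4 J pS bern binEnt
  simp only [Fintype.sum_bool, Bool.and_self, Bool.and_false, Bool.and_true,
    Bool.false_and, Bool.true_and]
  norm_num
  rw [show (1 - q) * p + (1 - q) * (1 - p) = 1 - q from by ring]
  rw [show q * (1 - α) * p + q * (1 - α) * (1 - p) + (1 - q) =
      q * (1 - α) + (1 - q) from by ring]
  rw [show (1:ℝ) - q * α = q * (1 - α) + (1 - q) from by ring]
  rw [show (1:ℝ) - q * (1 - α) / (q * (1 - α) + (1 - q)) =
      (1 - q) / (q * (1 - α) + (1 - q)) from by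
    rw [eq_div_iff hD.ne']; field_simp; ring]
  linear_combination (norm := skip) aux p (1 - q) (q * (1 - α)) hp0 hp1 hA hB hD
  simp only [logdd]
  ring
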